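/- Fix d ≥ 1. Let μ be a measure on (0,∞) and suppose there exist δ ∈ (0,1) and 0 < c₁ ≤ c₂ such that c₁·∫_A t^{−2}·(log(e + 1/t))^{−2} dt ≤ μ(A) ≤ c₂·∫_A t^{−2}·(log(e + 1/t))^{−2} dt for every measurable A ⊆ (0, δ], and such that μ((δ, ∞)) < ∞. Define j(r) := ∫_{(0,∞)} (4πt)^{−d/2}·exp(−r²/(4t)) dμ(t) for r > 0. Then there exist constants 0 < C₁ ≤ C₂ and r₀ ∈ (0,1) such that C₁·r^{−d−2}·(log(1/r))^{−2} ≤ j(r) ≤ C₂·r^{−d−2}·(log(1/r))^{−2} for all r ∈ (0, r₀]. -/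

import Mathlib

open MeasureTheory ENNReal Set

lemma aux_exp_neg_le (k : ℕ) {x : ℝ} (hx : 0 < x) :
    Real.exp (-x) ≤ (Nat.factorial k : ℝ) / x ^ k := by
  have h1 : x ^ k / (Nat.factorial k : ℝ) ≤ Real.exp x := by
    refine le_trans ?_ (Real.sum_le_exp_of_nonneg hx.le (k+1))
    exact Finset.single_le_sum (f := fun i => x ^ i / (Nat.factorial i : ℝ))
      (fun i _ => by positivity) (Finset.self_mem_range_succ k)
  have hk : (0:ℝ) < x ^ k / (Nat.factorial k : ℝ) := by positivity
  calc Real.exp (-x) = (Real.exp x)⁻¹ := Real.exp_neg x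
    _ ≤ (x ^ k / (Nat.factorial k : ℝ))⁻¹ := by gcongr
    _ = (Nat.factorial k : ℝ) / x ^ k := by rw [inv_div]

lemma aux_lint_rpow {q a b : ℝ} (hq : 2 ≤ q) (ha : 0 < a) (hab : a ≤ b) :
    ∫⁻ t in Set.Ioc a b, ENNReal.ofReal (t ^ (-q)) ≤ ENNReal.ofReal (a ^ (1 - q)) := by
  have hb : 0 < b := lt_of_lt_of_le ha hab
  have h0 : (0:ℝ) ∉ Set.uIcc a b := by
    rw [Set.uIcc_of_le hab]
    intro h
    exact absurd (Set.mem_Icc.1 h).1 (not_le.2 ha)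
  have hint : IntervalIntegrable (fun t : ℝ => t ^ (-q)) volume a b :=
    intervalIntegral.intervalIntegrable_rpow (Or.inr h0)
  have hInt : IntegrableOn (fun t : ℝ => t ^ (-q)) (Set.Ioc a b) volume :=
    (intervalIntegrable_iff_integrableOn_Ioc_of_le hab).1 hint
  have hnn : 0 ≤ᵐ[volume.restrict (Set.Ioc a b)] fun t : ℝ => t ^ (-q) := by
    filter_upwards [ae_restrict_mem measurableSet_Ioc] with t ht
    exact Real.rpow_nonneg (le_of_lt (lt_trans ha ht.1)) (-q)
  rw [← ofReal_integral_eq_lintegral_ofReal hInt hnn]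
  apply ENNReal.ofReal_le_ofReal
  rw [← intervalIntegral.integral_of_le hab]
  rw [integral_rpow (Or.inr ⟨by linarith, h0⟩)]
  have h1 : (0:ℝ) ≤ a ^ (1 - q) := Real.rpow_nonneg ha.le _
  have h2 : (0:ℝ) ≤ b ^ (1 - q) := Real.rpow_nonneg hb.le _
  have hne : -q + 1 = 1 - q := by ring
  rw [hne]
  rw [div_le_iff_of_neg (by linarith : 1 - q < 0)]
  nlinarith

lemma aux_sq_rpow {d : ℕ} {r : ℝ} (hr : 0 < r) :
    ((r ^ 2 : ℝ)) ^ (-(d:ℝ)/2) = (r ^ d)⁻¹ := by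
  rw [← Real.rpow_natCast r 2, ← Real.rpow_mul hr.le,
    show ((2:ℕ):ℝ) * (-(d:ℝ)/2) = -(d:ℝ) by push_cast; ring,
    Real.rpow_neg hr.le, Real.rpow_natCast]

lemma aux_rpow_nat (d : ℕ) (r : ℝ) :
    r ^ ((d:ℝ)+2) = r ^ (d+2) := by
  rw [← Real.rpow_natCast r (d+2)]
  congr 1
  push_cast
  ring

lemma auxLow (d : ℕ) {r L c₁ : ℝ} (hr : 0 < r) (hL : 1 ≤ L) (hc₁ : 0 < c₁) :
    c₁ * Real.exp (-(1/4:ℝ)) * (8*Real.pi) ^ (-(d:ℝ)/2) / 64 * (r ^ ((d:ℝ)+2))⁻¹ * (L^2)⁻¹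
    ≤ (4*Real.pi*(2*r^2)) ^ (-(d:ℝ)/2) * Real.exp (-(1/4:ℝ)) *
      (c₁ * ((((2*r^2)^2 * (4*L)^2)⁻¹) * r^2)) := by
  have hbase : (4*Real.pi*(2*r^2) : ℝ) = (8*Real.pi) * r^2 := by ring
  rw [hbase, Real.mul_rpow (x := 8*Real.pi) (y := r^2) (by positivity) (by positivity), aux_sq_rpow hr, aux_rpow_nat]
  have hLpos : 0 < L := by linarith
  apply le_of_eq
  field_simp
  ring

lemma auxTailW (d : ℕ) {r L : ℝ} (hr : 0 < r) (hr1 : r < 1) (hL : 1 ≤ L)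
    (hLr : L = Real.log (1/r)) :
    1 ≤ (r ^ ((d:ℝ)+2))⁻¹ * (L^2)⁻¹ := by
  rw [aux_rpow_nat]
  have h1 : L ≤ 1/r := by
    rw [hLr]
    have := Real.log_le_sub_one_of_pos (show (0:ℝ) < 1/r by positivity)
    linarith
  have hd2 : r^(d+2) ≤ r^2 := pow_le_pow_of_le_one hr.le hr1.le (by omega)
  have hL2 : L^2 ≤ (1/r)^2 := pow_le_pow_left₀ (by linarith) h1 2
  have h2 : r^(d+2) * L^2 ≤ 1 := by
    calc r^(d+2)*L^2 ≤ r^2 * (1/r)^2 :=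
          mul_le_mul hd2 hL2 (by positivity) (by positivity)
      _ = 1 := by field_simp
  calc (1:ℝ) = (1:ℝ)⁻¹ := by norm_num
    _ ≤ (r^(d+2) * L^2)⁻¹ := by gcongr
    _ = (r^(d+2))⁻¹ * (L^2)⁻¹ := by rw [mul_inv]

lemma auxLowN {r t L : ℝ} (hr : 0 < r) (hr1 : r < 1) (hL : 1 ≤ L)
    (hLr : L = Real.log (1/r)) (ht1 : r^2 < t) (ht2 : t ≤ 2*r^2) :
    (((2*r^2)^2 * (4*L)^2)⁻¹ : ℝ) ≤ (t^2 * Real.log (Real.exp 1 + 1/t)^2)⁻¹ := by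
  have ht : 0 < t := lt_trans (by positivity) ht1
  have he2 : (2:ℝ) ≤ Real.exp 1 := by have := Real.add_one_le_exp 1; linarith
  have hℓ1 : 1 ≤ Real.log (Real.exp 1 + 1/t) := by
    calc (1:ℝ) = Real.log (Real.exp 1) := (Real.log_exp 1).symm
      _ ≤ _ := Real.log_le_log (Real.exp_pos 1) (by nlinarith [one_div_pos.mpr ht])
  have hr2 : r^2 ≤ 1 := by nlinarith
  have hub : Real.exp 1 + 1/t ≤ (Real.exp 1 * Real.exp 1) * (1/r)^2 := by
    have h1t : 1/t ≤ 1/r^2 := one_div_le_one_div_of_le (by positivity) ht1.le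
    have e1 : ((1:ℝ)/r)^2 = 1/r^2 := by rw [div_pow, one_pow]
    rw [e1]
    have key : Real.exp 1 * r^2 + 1 ≤ Real.exp 1 * Real.exp 1 := by nlinarith
    rw [mul_one_div, le_div_iff₀ (show (0:ℝ) < r^2 by positivity)]
    have expand : (Real.exp 1 + 1/t) * r^2 ≤ (Real.exp 1 + 1/r^2) * r^2 := by
      apply mul_le_mul_of_nonneg_right (by linarith) (by positivity)
    have e2 : (Real.exp 1 + 1/r^2) * r^2 = Real.exp 1 * r^2 + 1 := by field_simp
    linarith
  have hℓub : Real.log (Real.exp 1 + 1/t) ≤ 4*L := by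
    have l1 : Real.log (Real.exp 1 + 1/t) ≤ Real.log ((Real.exp 1*Real.exp 1)*(1/r)^2) :=
      Real.log_le_log (by positivity) hub
    have l2 : Real.log ((Real.exp 1*Real.exp 1)*((1:ℝ)/r)^2) = 2 + 2*L := by
      rw [Real.log_mul (by positivity) (by positivity),
        Real.log_mul (Real.exp_pos 1).ne' (Real.exp_pos 1).ne', Real.log_exp,
        Real.log_pow, hLr]
      push_cast
      ring
    rw [l2] at l1
    linarith
  have hnum : t^2 * Real.log (Real.exp 1 + 1/t)^2 ≤ (2*r^2)^2 * (4*L)^2 := by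
    apply mul_le_mul (pow_le_pow_left₀ ht.le ht2 2)
      (pow_le_pow_left₀ (by linarith) hℓub 2) (by positivity) (by positivity)
  have hpos : 0 < t^2 * Real.log (Real.exp 1 + 1/t)^2 :=
    mul_pos (by positivity) (pow_pos (by linarith) 2)
  gcongr

lemma auxA (d : ℕ) {r t L : ℝ} (hr : 0 < r) (hL : 1 ≤ L)
    (hLr : L = Real.log (1/r)) (ht : 0 < t) (htr : t ≤ r^2) :
    (t ^ 2 * Real.log (Real.exp 1 + 1 / t) ^ 2)⁻¹ *
      ((4 * Real.pi * t) ^ (-(d : ℝ) / 2) * Real.exp (-r ^ 2 / (4 * t)))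
    ≤ ((4*Real.pi) ^ (-(d:ℝ)/2) * (Nat.factorial (d+2) : ℝ) * 4^(d+2) / 4) *
      ((r ^ ((d:ℝ)+2))⁻¹ * (L^2)⁻¹) * (r^2)⁻¹ := by
  have hπ := Real.pi_pos
  have hLpos : 0 < L := by linarith
  have hℓ2L : 2*L ≤ Real.log (Real.exp 1 + 1/t) := by
    have h1 : ((1:ℝ)/r)^2 ≤ 1/t := by
      rw [div_pow, one_pow]
      exact one_div_le_one_div_of_le ht htr
    have h2 : Real.log (((1:ℝ)/r)^2) ≤ Real.log (1/t) :=
      Real.log_le_log (by positivity) h1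
    have h3 : Real.log ((1:ℝ)/t) ≤ Real.log (Real.exp 1 + 1/t) :=
      Real.log_le_log (by positivity) (by nlinarith [Real.exp_pos 1])
    rw [Real.log_pow, ← hLr] at h2
    push_cast at h2
    linarith
  have hexp : Real.exp (-r^2/(4*t)) ≤
      (Nat.factorial (d+2) : ℝ) * (4*t)^(d+2) / (r^2)^(d+2) := by
    have hx : 0 < r^2/(4*t) := by positivity
    have h := aux_exp_neg_le (d+2) hx
    calc Real.exp (-r^2/(4*t)) = Real.exp (-(r^2/(4*t))) := by rw [neg_div]
      _ ≤ (Nat.factorial (d+2) : ℝ) / (r^2/(4*t))^(d+2) := h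
      _ = (Nat.factorial (d+2) : ℝ) * (4*t)^(d+2) / (r^2)^(d+2) := by
          rw [div_pow, div_div_eq_mul_div]
  have hbase : (4*Real.pi*t) ^ (-(d:ℝ)/2) = (4*Real.pi) ^ (-(d:ℝ)/2) * t ^ (-(d:ℝ)/2) :=
    Real.mul_rpow (by positivity) ht.le
  have hT : t ^ (-(d:ℝ)/2) * ((4*t)^(d+2) * (t^2)⁻¹) ≤ 4^(d+2) * r ^ d := by
    have e1 : (4*t:ℝ)^(d+2) = 4^(d+2) * t^(d+2) := mul_pow 4 t (d+2)
    have e2 : (t:ℝ)^(d+2) * (t^2)⁻¹ = t ^ d := by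
      rw [pow_add]
      field_simp
    have e3 : t ^ (-(d:ℝ)/2) * t^d ≤ r ^ d := by
      have q1 : t ^ (-(d:ℝ)/2) * t ^ d = t ^ ((d:ℝ)/2) := by
        rw [← Real.rpow_natCast t d, ← Real.rpow_add ht]
        congr 1
        ring
      have q2 : ((r^2:ℝ)) ^ ((d:ℝ)/2) = r ^ d := by
        rw [← Real.rpow_natCast r 2, ← Real.rpow_mul hr.le, ← Real.rpow_natCast r d]
        congr 1
        push_cast
        ring
      rw [q1, ← q2]
      exact Real.rpow_le_rpow ht.le htr (by positivity)
    calc t ^ (-(d:ℝ)/2) * ((4*t)^(d+2) * (t^2)⁻¹)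
        = 4^(d+2) * (t ^ (-(d:ℝ)/2) * (t^(d+2) * (t^2)⁻¹)) := by rw [e1]; ring
      _ = 4^(d+2) * (t ^ (-(d:ℝ)/2) * t^d) := by rw [e2]
      _ ≤ 4^(d+2) * r^d := by
          apply mul_le_mul_of_nonneg_left e3 (by positivity)
  have hℓpos : (0:ℝ) < Real.log (Real.exp 1 + 1/t) := by linarith
  have step1 : (t ^ 2 * Real.log (Real.exp 1 + 1/t) ^ 2)⁻¹ ≤ (t^2 * (2*L)^2)⁻¹ := by
    have hp : (0:ℝ) < t^2 * (2*L)^2 := by positivity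
    gcongr
  calc (t ^ 2 * Real.log (Real.exp 1 + 1 / t) ^ 2)⁻¹ *
      ((4 * Real.pi * t) ^ (-(d : ℝ) / 2) * Real.exp (-r ^ 2 / (4 * t)))
      ≤ (t^2 * (2*L)^2)⁻¹ * (((4*Real.pi) ^ (-(d:ℝ)/2) * t ^ (-(d:ℝ)/2)) *
          ((Nat.factorial (d+2) : ℝ) * (4*t)^(d+2) / (r^2)^(d+2))) := by
        rw [hbase]
        apply mul_le_mul step1 (mul_le_mul_of_nonneg_left hexp (by positivity))
          (by positivity) (by positivity)
    _ = ((2*L)^2)⁻¹ * (4*Real.pi) ^ (-(d:ℝ)/2) * ((Nat.factorial (d+2) : ℝ) / (r^2)^(d+2)) *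
          (t ^ (-(d:ℝ)/2) * ((4*t)^(d+2) * (t^2)⁻¹)) := by ring
    _ ≤ ((2*L)^2)⁻¹ * (4*Real.pi) ^ (-(d:ℝ)/2) * ((Nat.factorial (d+2) : ℝ) / (r^2)^(d+2)) *
          (4^(d+2) * r ^ d) := by
        apply mul_le_mul_of_nonneg_left hT (by positivity)
    _ = ((4*Real.pi) ^ (-(d:ℝ)/2) * (Nat.factorial (d+2) : ℝ) * 4^(d+2) / 4) *
      ((r ^ ((d:ℝ)+2))⁻¹ * (L^2)⁻¹) * (r^2)⁻¹ := by
        rw [aux_rpow_nat]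
        field_simp
        ring

lemma auxB (d : ℕ) {r t L : ℝ} (hr : 0 < r) (hL : 1 ≤ L) (hLr : L = Real.log (1/r))
    (ht : 0 < t) (htr : t ≤ r) :
    (t ^ 2 * Real.log (Real.exp 1 + 1 / t) ^ 2)⁻¹ *
      ((4 * Real.pi * t) ^ (-(d : ℝ) / 2) * Real.exp (-r ^ 2 / (4 * t)))
    ≤ ((4*Real.pi) ^ (-(d:ℝ)/2) * (L^2)⁻¹) * t ^ (-((d:ℝ)/2+2)) := by
  have hπ := Real.pi_pos
  have hLpos : 0 < L := by linarith
  have hℓL : L ≤ Real.log (Real.exp 1 + 1/t) := by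
    have h1 : (1:ℝ)/r ≤ 1/t := one_div_le_one_div_of_le ht htr
    have h2 : Real.log ((1:ℝ)/r) ≤ Real.log (1/t) := Real.log_le_log (by positivity) h1
    have h3 : Real.log ((1:ℝ)/t) ≤ Real.log (Real.exp 1 + 1/t) :=
      Real.log_le_log (by positivity) (by nlinarith [Real.exp_pos 1])
    rw [← hLr] at h2
    linarith
  have hexp : Real.exp (-r^2/(4*t)) ≤ 1 := by
    rw [← Real.exp_zero]
    apply Real.exp_le_exp.2
    rw [neg_div]
    have : (0:ℝ) ≤ r^2/(4*t) := by positivity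
    linarith
  have hbase : (4*Real.pi*t) ^ (-(d:ℝ)/2) = (4*Real.pi) ^ (-(d:ℝ)/2) * t ^ (-(d:ℝ)/2) :=
    Real.mul_rpow (by positivity) ht.le
  have hmerge : t ^ (-(d:ℝ)/2) * (t^2)⁻¹ = t ^ (-((d:ℝ)/2+2)) := by
    rw [← Real.rpow_natCast t 2, ← Real.rpow_neg ht.le, ← Real.rpow_add ht]
    congr 1
    push_cast
    ring
  have step1 : (t ^ 2 * Real.log (Real.exp 1 + 1/t) ^ 2)⁻¹ ≤ (t^2 * L^2)⁻¹ := by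
    have hp : (0:ℝ) < t^2 * L^2 := by positivity
    gcongr
  calc (t ^ 2 * Real.log (Real.exp 1 + 1 / t) ^ 2)⁻¹ *
      ((4 * Real.pi * t) ^ (-(d : ℝ) / 2) * Real.exp (-r ^ 2 / (4 * t)))
      ≤ (t^2 * L^2)⁻¹ * (((4*Real.pi) ^ (-(d:ℝ)/2) * t ^ (-(d:ℝ)/2)) * 1) := by
        rw [hbase]
        apply mul_le_mul step1 (mul_le_mul_of_nonneg_left hexp (by positivity))
          (by positivity) (by positivity)
    _ = ((4*Real.pi) ^ (-(d:ℝ)/2) * (L^2)⁻¹) * (t ^ (-(d:ℝ)/2) * (t^2)⁻¹) := by ring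
    _ = ((4*Real.pi) ^ (-(d:ℝ)/2) * (L^2)⁻¹) * t ^ (-((d:ℝ)/2+2)) := by rw [hmerge]

lemma auxC0 (d : ℕ) {r t : ℝ} (ht : 0 < t) :
    (t ^ 2 * Real.log (Real.exp 1 + 1 / t) ^ 2)⁻¹ *
      ((4 * Real.pi * t) ^ (-(d : ℝ) / 2) * Real.exp (-r ^ 2 / (4 * t)))
    ≤ (4*Real.pi) ^ (-(d:ℝ)/2) * t ^ (-((d:ℝ)/2+2)) := by
  have hπ := Real.pi_pos
  have hℓ1 : 1 ≤ Real.log (Real.exp 1 + 1/t) := by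
    calc (1:ℝ) = Real.log (Real.exp 1) := (Real.log_exp 1).symm
      _ ≤ _ := Real.log_le_log (Real.exp_pos 1) (by nlinarith [one_div_pos.mpr ht])
  have hexp : Real.exp (-r^2/(4*t)) ≤ 1 := by
    rw [← Real.exp_zero]
    apply Real.exp_le_exp.2
    rw [neg_div]
    have : (0:ℝ) ≤ r^2/(4*t) := by positivity
    linarith
  have hbase : (4*Real.pi*t) ^ (-(d:ℝ)/2) = (4*Real.pi) ^ (-(d:ℝ)/2) * t ^ (-(d:ℝ)/2) :=
    Real.mul_rpow (by positivity) ht.le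
  have hmerge : t ^ (-(d:ℝ)/2) * (t^2)⁻¹ = t ^ (-((d:ℝ)/2+2)) := by
    rw [← Real.rpow_natCast t 2, ← Real.rpow_neg ht.le, ← Real.rpow_add ht]
    congr 1
    push_cast
    ring
  have step1 : (t ^ 2 * Real.log (Real.exp 1 + 1/t) ^ 2)⁻¹ ≤ (t^2 * 1)⁻¹ := by
    have hp : (0:ℝ) < t^2 * 1 := by positivity
    gcongr
    nlinarith
  calc (t ^ 2 * Real.log (Real.exp 1 + 1 / t) ^ 2)⁻¹ *
      ((4 * Real.pi * t) ^ (-(d : ℝ) / 2) * Real.exp (-r ^ 2 / (4 * t)))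
      ≤ (t^2 * 1)⁻¹ * (((4*Real.pi) ^ (-(d:ℝ)/2) * t ^ (-(d:ℝ)/2)) * 1) := by
        rw [hbase]
        apply mul_le_mul step1 (mul_le_mul_of_nonneg_left hexp (by positivity))
          (by positivity) (by positivity)
    _ = (4*Real.pi) ^ (-(d:ℝ)/2) * (t ^ (-(d:ℝ)/2) * (t^2)⁻¹) := by ring
    _ = (4*Real.pi) ^ (-(d:ℝ)/2) * t ^ (-((d:ℝ)/2+2)) := by rw [hmerge]

lemma auxC (d : ℕ) (hd : 1 ≤ d) {r L : ℝ} (hr : 0 < r) (hr1 : r < 1) (hL : 1 ≤ L)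
    (hLr : L = Real.log (1/r)) :
    (4*Real.pi) ^ (-(d:ℝ)/2) * r ^ (1-((d:ℝ)/2+2))
    ≤ ((4*Real.pi) ^ (-(d:ℝ)/2) * (16/9)) * ((r ^ ((d:ℝ)+2))⁻¹ * (L^2)⁻¹) := by
  have hπ := Real.pi_pos
  have hLpos : 0 < L := by linarith
  have hApos : (0:ℝ) < r ^ ((d:ℝ)/2+1) := Real.rpow_pos_of_pos hr _
  have h1 : r ^ (1-((d:ℝ)/2+2)) = (r ^ ((d:ℝ)/2+1))⁻¹ := by
    rw [← Real.rpow_neg hr.le]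
    congr 1
    ring
  have h2 : r ^ ((d:ℝ)+2) = r ^ ((d:ℝ)/2+1) * r ^ ((d:ℝ)/2+1) := by
    rw [← Real.rpow_add hr]
    congr 1
    ring
  have hinv1r : (1:ℝ) ≤ 1/r := by
    rw [le_div_iff₀ hr]
    linarith
  have hA' : ((1:ℝ)/r) ^ ((d:ℝ)/2+1) = (r ^ ((d:ℝ)/2+1))⁻¹ := by
    rw [one_div, Real.inv_rpow hr.le]
  have hkey : r ^ ((d:ℝ)/2+1) * L^2 ≤ 16/9 := by
    have hL34 : L ≤ ((1:ℝ)/r) ^ (3/4 : ℝ) / (3/4) := by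
      rw [hLr]
      exact Real.log_le_rpow_div (by positivity) (by norm_num)
    have e : (((1:ℝ)/r) ^ (3/4:ℝ))^2 = ((1:ℝ)/r) ^ (3/2:ℝ) := by
      rw [← Real.rpow_natCast (((1:ℝ)/r) ^ (3/4:ℝ)) 2, ← Real.rpow_mul (by positivity)]
      norm_num
    have hL2 : L^2 ≤ (16/9) * ((1:ℝ)/r) ^ (3/2:ℝ) := by
      calc L^2 ≤ (((1:ℝ)/r)^(3/4:ℝ)/(3/4))^2 :=
            pow_le_pow_left₀ (by linarith) hL34 2
        _ = (16/9) * (((1:ℝ)/r)^(3/4:ℝ))^2 := by ring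
        _ = (16/9) * ((1:ℝ)/r)^(3/2:ℝ) := by rw [e]
    have h32 : ((1:ℝ)/r)^(3/2:ℝ) ≤ ((1:ℝ)/r)^((d:ℝ)/2+1) := by
      apply Real.rpow_le_rpow_of_exponent_le hinv1r
      have : (1:ℝ) ≤ (d:ℝ) := by exact_mod_cast hd
      linarith
    have hfin : L^2 ≤ 16/9 * (r ^ ((d:ℝ)/2+1))⁻¹ := by
      rw [← hA']
      calc L^2 ≤ (16/9) * ((1:ℝ)/r)^(3/2:ℝ) := hL2
        _ ≤ (16/9) * ((1:ℝ)/r)^((d:ℝ)/2+1) := by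
            apply mul_le_mul_of_nonneg_left h32 (by norm_num)
    calc r ^ ((d:ℝ)/2+1) * L^2 ≤ r ^ ((d:ℝ)/2+1) * (16/9 * (r ^ ((d:ℝ)/2+1))⁻¹) :=
          mul_le_mul_of_nonneg_left hfin hApos.le
      _ = 16/9 := by
          field_simp
  rw [h1, h2]
  have h4 : (r ^ ((d:ℝ)/2+1))⁻¹ ≤
      16/9 * ((r ^ ((d:ℝ)/2+1) * r ^ ((d:ℝ)/2+1))⁻¹ * (L^2)⁻¹) := by
    rw [show (16/9:ℝ) * ((r ^ ((d:ℝ)/2+1) * r ^ ((d:ℝ)/2+1))⁻¹ * (L^2)⁻¹)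
        = (16/9)/(r ^ ((d:ℝ)/2+1) * r ^ ((d:ℝ)/2+1) * L^2) by ring]
    rw [le_div_iff₀ (by positivity)]
    calc (r ^ ((d:ℝ)/2+1))⁻¹ * (r ^ ((d:ℝ)/2+1) * r ^ ((d:ℝ)/2+1) * L^2)
        = r ^ ((d:ℝ)/2+1) * L^2 := by
          field_simp
      _ ≤ 16/9 := hkey
  calc (4*Real.pi)^(-(d:ℝ)/2) * (r ^ ((d:ℝ)/2+1))⁻¹
      ≤ (4*Real.pi)^(-(d:ℝ)/2) *
        (16/9 * ((r ^ ((d:ℝ)/2+1) * r ^ ((d:ℝ)/2+1))⁻¹ * (L^2)⁻¹)) :=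
        mul_le_mul_of_nonneg_left h4 (by positivity)
    _ = ((4*Real.pi)^(-(d:ℝ)/2) * (16/9)) *
        ((r ^ ((d:ℝ)/2+1) * r ^ ((d:ℝ)/2+1))⁻¹ * (L^2)⁻¹) := by ring



set_option maxHeartbeats 2000000 in
theorem stmt14 (d : ℕ) (hd : 1 ≤ d) (μ : Measure ℝ)
    (δ c₁ c₂ : ℝ) (hδ0 : 0 < δ) (hδ1 : δ < 1) (hc₁ : 0 < c₁) (hc : c₁ ≤ c₂)
    (hlow : ∀ A : Set ℝ, MeasurableSet A → A ⊆ Set.Ioc 0 δ →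
      ENNReal.ofReal c₁ *
          (∫⁻ t in A,
            ENNReal.ofReal ((t ^ 2 * Real.log (Real.exp 1 + 1 / t) ^ 2)⁻¹)) ≤ μ A)
    (hhigh : ∀ A : Set ℝ, MeasurableSet A → A ⊆ Set.Ioc 0 δ →
      μ A ≤ ENNReal.ofReal c₂ *
          (∫⁻ t in A,
            ENNReal.ofReal ((t ^ 2 * Real.log (Real.exp 1 + 1 / t) ^ 2)⁻¹)))
    (hfin : μ (Set.Ioi δ) < ⊤)
    (j : ℝ → ℝ≥0∞)
    (hj : ∀ r : ℝ, j r = ∫⁻ t in Set.Ioi (0 : ℝ),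
      ENNReal.ofReal
        ((4 * Real.pi * t) ^ (-(d : ℝ) / 2) * Real.exp (-r ^ 2 / (4 * t))) ∂μ) :
    ∃ C₁ C₂ r₀ : ℝ, 0 < C₁ ∧ C₁ ≤ C₂ ∧ 0 < r₀ ∧ r₀ < 1 ∧
      ∀ r : ℝ, 0 < r → r ≤ r₀ →
        ENNReal.ofReal (C₁ * (r ^ ((d : ℝ) + 2))⁻¹ * (Real.log (1 / r) ^ 2)⁻¹) ≤ j r ∧
        j r ≤ ENNReal.ofReal (C₂ * (r ^ ((d : ℝ) + 2))⁻¹ * (Real.log (1 / r) ^ 2)⁻¹) := by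
  have hπ := Real.pi_pos
  have hGmeas : Measurable (fun t : ℝ =>
      ENNReal.ofReal ((t ^ 2 * Real.log (Real.exp 1 + 1 / t) ^ 2)⁻¹)) := by
    apply Measurable.ennreal_ofReal
    exact ((measurable_id.pow_const 2).mul
      ((Real.measurable_log.comp
        (measurable_const.add (measurable_const.div measurable_id))).pow_const 2)).inv
  set G := fun t : ℝ => ENNReal.ofReal ((t ^ 2 * Real.log (Real.exp 1 + 1 / t) ^ 2)⁻¹)
    with hG
  set M : ℝ := (μ (Set.Ioi δ)).toReal with hM
  have hMnn : 0 ≤ M := ENNReal.toReal_nonneg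
  set KA : ℝ := (4*Real.pi) ^ (-(d:ℝ)/2) * (Nat.factorial (d+2) : ℝ) * 4^(d+2) / 4 with hKA
  set KB : ℝ := (4*Real.pi) ^ (-(d:ℝ)/2) with hKB
  set KC : ℝ := (4*Real.pi) ^ (-(d:ℝ)/2) * (16/9) with hKC
  set KT : ℝ := (4*Real.pi*δ) ^ (-(d:ℝ)/2) * M with hKT
  set C₁ : ℝ := c₁ * Real.exp (-(1/4:ℝ)) * (8*Real.pi) ^ (-(d:ℝ)/2) / 64 with hC₁
  have hC₁pos : 0 < C₁ := by rw [hC₁]; positivity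
  have hKAnn : 0 ≤ KA := by rw [hKA]; positivity
  have hKBnn : 0 ≤ KB := by rw [hKB]; positivity
  have hKCnn : 0 ≤ KC := by rw [hKC]; positivity
  have hKTnn : 0 ≤ KT := by
    rw [hKT]
    exact mul_nonneg (Real.rpow_nonneg (by positivity) _) hMnn
  have hc₂ : 0 < c₂ := lt_of_lt_of_le hc₁ hc
  set C₂ : ℝ := C₁ + (c₂ * (KA + KB + KC) + KT) with hC₂
  have hC₁₂ : C₁ ≤ C₂ := by
    rw [hC₂]
    nlinarith [mul_nonneg hc₂.le (by linarith : (0:ℝ) ≤ KA + KB + KC)]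
  have hexp1lt : Real.exp (-1) < 1 := by
    rw [← Real.exp_zero]
    exact Real.exp_lt_exp.2 (by norm_num)
  refine ⟨C₁, C₂, min (Real.exp (-1)) (δ/2), hC₁pos, hC₁₂,
    lt_min (Real.exp_pos _) (by linarith), lt_of_le_of_lt (min_le_left _ _) hexp1lt, ?_⟩
  intro r hr hrr₀
  have hre : r ≤ Real.exp (-1) := le_trans hrr₀ (min_le_left _ _)
  have hrhalf : r ≤ δ/2 := le_trans hrr₀ (min_le_right _ _)
  have hr1 : r < 1 := lt_of_le_of_lt hre hexp1lt
  set L := Real.log (1/r) with hLdef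
  have hL1 : 1 ≤ L := by
    rw [hLdef]
    have h2 := one_div_le_one_div_of_le hr hre
    rw [Real.exp_neg, one_div, inv_inv] at h2
    calc (1:ℝ) = Real.log (Real.exp 1) := (Real.log_exp 1).symm
      _ ≤ Real.log (1/r) := Real.log_le_log (Real.exp_pos 1) h2
  have hLpos : 0 < L := by linarith
  have hrδ : r ≤ δ := by linarith
  have hr2r : r^2 ≤ r := by nlinarith
  have h2r2 : 2*r^2 ≤ δ := by nlinarith
  have hr2pos : 0 < r^2 := by positivity
  have hjr := hj r
  set F := fun t : ℝ => ENNReal.ofReal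
    ((4 * Real.pi * t) ^ (-(d : ℝ) / 2) * Real.exp (-r ^ 2 / (4 * t))) with hF
  have hFmeas : Measurable F := by
    rw [hF]
    apply Measurable.ennreal_ofReal
    fun_prop
  have hWnn : (0:ℝ) ≤ (r ^ ((d:ℝ)+2))⁻¹ * (L^2)⁻¹ := by positivity
  constructor
  · -- LOWER BOUND
    have hsub : Set.Ioc (r^2) (2*r^2) ⊆ Set.Ioc 0 δ :=
      fun t ht => ⟨lt_trans hr2pos ht.1, le_trans ht.2 h2r2⟩
    have hsub0 : Set.Ioc (r^2) (2*r^2) ⊆ Set.Ioi 0 :=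
      fun t ht => lt_trans hr2pos ht.1
    set m : ℝ := (4*Real.pi*(2*r^2)) ^ (-(d:ℝ)/2) * Real.exp (-(1/4:ℝ)) with hm
    set n : ℝ := (((2*r^2)^2 * (4*L)^2)⁻¹ : ℝ) with hn
    have hmnn : 0 ≤ m := by rw [hm]; positivity
    have hnnn : 0 ≤ n := by rw [hn]; positivity
    have step_n : ∀ t ∈ Set.Ioc (r^2) (2*r^2), ENNReal.ofReal n ≤ G t := by
      intro t ht
      rw [hG, hn]
      exact ENNReal.ofReal_le_ofReal (auxLowN hr hr1 hL1 hLdef ht.1 ht.2)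
    have hμs : ENNReal.ofReal c₁ * (ENNReal.ofReal n * ENNReal.ofReal (r^2)) ≤
        μ (Set.Ioc (r^2) (2*r^2)) := by
      refine le_trans ?_ (hlow _ measurableSet_Ioc hsub)
      apply mul_le_mul_right
      calc ENNReal.ofReal n * ENNReal.ofReal (r^2)
          = ∫⁻ _ in Set.Ioc (r^2) (2*r^2), ENNReal.ofReal n := by
            rw [setLIntegral_const, Real.volume_Ioc]
            congr 1
            ring_nf
        _ ≤ ∫⁻ t in Set.Ioc (r^2) (2*r^2), G t :=
            setLIntegral_mono' measurableSet_Ioc step_n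
    have step_m : ∀ t ∈ Set.Ioc (r^2) (2*r^2), ENNReal.ofReal m ≤ F t := by
      intro t ht
      have ht0 : 0 < t := lt_trans hr2pos ht.1
      rw [hF, hm]
      apply ENNReal.ofReal_le_ofReal
      have hdnp : -(d:ℝ)/2 ≤ 0 := by
        have : (0:ℝ) ≤ (d:ℝ) := Nat.cast_nonneg d
        linarith
      apply mul_le_mul
      · exact Real.rpow_le_rpow_of_nonpos (by positivity) (by nlinarith [ht.2]) hdnp
      · apply Real.exp_le_exp.2
        rw [neg_div]
        apply neg_le_neg
        rw [div_le_iff₀ (by positivity : (0:ℝ) < 4*t)]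
        nlinarith [ht.1]
      · exact (Real.exp_pos _).le
      · exact Real.rpow_nonneg (by positivity) _
    calc ENNReal.ofReal (C₁ * (r ^ ((d:ℝ)+2))⁻¹ * (L^2)⁻¹)
        ≤ ENNReal.ofReal (m * (c₁ * (n * r^2))) := by
          apply ENNReal.ofReal_le_ofReal
          rw [hC₁, hm, hn]
          exact auxLow d hr hL1 hc₁
      _ = ENNReal.ofReal m * (ENNReal.ofReal c₁ * (ENNReal.ofReal n * ENNReal.ofReal (r^2))) := by
          rw [ENNReal.ofReal_mul hmnn, ENNReal.ofReal_mul hc₁.le, ENNReal.ofReal_mul hnnn]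
      _ ≤ ENNReal.ofReal m * μ (Set.Ioc (r^2) (2*r^2)) := mul_le_mul_right hμs _
      _ = ∫⁻ _ in Set.Ioc (r^2) (2*r^2), ENNReal.ofReal m ∂μ := (setLIntegral_const _ _).symm
      _ ≤ ∫⁻ t in Set.Ioc (r^2) (2*r^2), F t ∂μ :=
          setLIntegral_mono' measurableSet_Ioc step_m
      _ ≤ ∫⁻ t in Set.Ioi 0, F t ∂μ := lintegral_mono_set hsub0
      _ = j r := hjr.symm
  · -- UPPER BOUND
    have hsplit : j r = (∫⁻ t in Set.Ioc 0 δ, F t ∂μ) + ∫⁻ t in Set.Ioi δ, F t ∂μ := by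
      rw [hjr, ← Set.Ioc_union_Ioi_eq_Ioi hδ0.le,
        lintegral_union measurableSet_Ioi Set.Ioc_disjoint_Ioi_same]
    have htail : ∫⁻ t in Set.Ioi δ, F t ∂μ ≤
        ENNReal.ofReal (KT * ((r ^ ((d:ℝ)+2))⁻¹ * (L^2)⁻¹)) := by
      have pt : ∀ t ∈ Set.Ioi δ, F t ≤ ENNReal.ofReal ((4*Real.pi*δ) ^ (-(d:ℝ)/2)) := by
        intro t ht
        have ht0 : 0 < t := lt_trans hδ0 ht
        rw [hF]
        apply ENNReal.ofReal_le_ofReal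
        have hdnp : -(d:ℝ)/2 ≤ 0 := by
          have : (0:ℝ) ≤ (d:ℝ) := Nat.cast_nonneg d
          linarith
        calc (4*Real.pi*t) ^ (-(d:ℝ)/2) * Real.exp (-r^2/(4*t))
            ≤ (4*Real.pi*δ) ^ (-(d:ℝ)/2) * 1 := by
              apply mul_le_mul
              · exact Real.rpow_le_rpow_of_nonpos (by positivity)
                  (by nlinarith [Set.mem_Ioi.1 ht]) hdnp
              · rw [← Real.exp_zero]
                apply Real.exp_le_exp.2
                rw [neg_div]
                have : (0:ℝ) ≤ r^2/(4*t) := by positivity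
                linarith
              · exact (Real.exp_pos _).le
              · exact Real.rpow_nonneg (by positivity) _
          _ = (4*Real.pi*δ) ^ (-(d:ℝ)/2) := mul_one _
      calc ∫⁻ t in Set.Ioi δ, F t ∂μ
          ≤ ∫⁻ _ in Set.Ioi δ, ENNReal.ofReal ((4*Real.pi*δ) ^ (-(d:ℝ)/2)) ∂μ :=
            setLIntegral_mono' measurableSet_Ioi pt
        _ = ENNReal.ofReal ((4*Real.pi*δ) ^ (-(d:ℝ)/2)) * μ (Set.Ioi δ) :=
            setLIntegral_const _ _
        _ = ENNReal.ofReal ((4*Real.pi*δ) ^ (-(d:ℝ)/2)) * ENNReal.ofReal M := by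
            rw [hM, ENNReal.ofReal_toReal hfin.ne]
        _ = ENNReal.ofReal KT := by
            rw [hKT, ENNReal.ofReal_mul (Real.rpow_nonneg (by positivity) _)]
        _ ≤ ENNReal.ofReal (KT * ((r ^ ((d:ℝ)+2))⁻¹ * (L^2)⁻¹)) := by
            apply ENNReal.ofReal_le_ofReal
            exact le_mul_of_one_le_right hKTnn (auxTailW d hr hr1 hL1 hLdef)
    have hmain : ∫⁻ t in Set.Ioc 0 δ, F t ∂μ ≤
        ENNReal.ofReal c₂ * ∫⁻ t in Set.Ioc 0 δ, G t * F t := by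
      have hle : μ.restrict (Set.Ioc 0 δ) ≤
          (ENNReal.ofReal c₂) • ((volume.withDensity G).restrict (Set.Ioc 0 δ)) := by
        refine Measure.le_iff.2 fun s hs => ?_
        rw [Measure.restrict_apply hs, Measure.smul_apply, Measure.restrict_apply hs,
          withDensity_apply _ (hs.inter measurableSet_Ioc), smul_eq_mul]
        exact hhigh _ (hs.inter measurableSet_Ioc) Set.inter_subset_right
      calc ∫⁻ t in Set.Ioc 0 δ, F t ∂μ
          ≤ ∫⁻ t, F t ∂((ENNReal.ofReal c₂) •
              ((volume.withDensity G).restrict (Set.Ioc 0 δ))) :=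
            lintegral_mono' hle (le_refl _)
        _ = ENNReal.ofReal c₂ * ∫⁻ t, F t ∂((volume.withDensity G).restrict (Set.Ioc 0 δ)) :=
            lintegral_smul_measure _ _
        _ = ENNReal.ofReal c₂ * ∫⁻ t, F t ∂((volume.restrict (Set.Ioc 0 δ)).withDensity G) := by
            rw [restrict_withDensity measurableSet_Ioc]
        _ = ENNReal.ofReal c₂ * ∫⁻ t in Set.Ioc 0 δ, G t * F t := by
            rw [lintegral_withDensity_eq_lintegral_mul _ hGmeas hFmeas]
            rfl
    have hq2 : (2:ℝ) ≤ (d:ℝ)/2 + 2 := by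
      have : (0:ℝ) ≤ (d:ℝ) := Nat.cast_nonneg d
      linarith
    have pA : ∫⁻ t in Set.Ioc 0 (r^2), G t * F t ≤
        ENNReal.ofReal (KA * ((r ^ ((d:ℝ)+2))⁻¹ * (L^2)⁻¹)) := by
      have pt : ∀ t ∈ Set.Ioc (0:ℝ) (r^2), G t * F t ≤
          ENNReal.ofReal (KA * ((r ^ ((d:ℝ)+2))⁻¹ * (L^2)⁻¹) * (r^2)⁻¹) := by
        intro t ht
        rw [hG, hF, ← ENNReal.ofReal_mul (by positivity)]
        apply ENNReal.ofReal_le_ofReal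
        rw [hKA]
        exact auxA d hr hL1 hLdef ht.1 ht.2
      calc ∫⁻ t in Set.Ioc 0 (r^2), G t * F t
          ≤ ∫⁻ _ in Set.Ioc 0 (r^2),
              ENNReal.ofReal (KA * ((r ^ ((d:ℝ)+2))⁻¹ * (L^2)⁻¹) * (r^2)⁻¹) :=
            setLIntegral_mono' measurableSet_Ioc pt
        _ = ENNReal.ofReal (KA * ((r ^ ((d:ℝ)+2))⁻¹ * (L^2)⁻¹) * (r^2)⁻¹) *
              ENNReal.ofReal (r^2 - 0) := by
            rw [setLIntegral_const, Real.volume_Ioc]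
        _ = ENNReal.ofReal (KA * ((r ^ ((d:ℝ)+2))⁻¹ * (L^2)⁻¹) * (r^2)⁻¹ * (r^2 - 0)) := by
            rw [← ENNReal.ofReal_mul (by positivity)]
        _ = ENNReal.ofReal (KA * ((r ^ ((d:ℝ)+2))⁻¹ * (L^2)⁻¹)) := by
            congr 1
            rw [sub_zero]
            field_simp
    have pB : ∫⁻ t in Set.Ioc (r^2) r, G t * F t ≤
        ENNReal.ofReal (KB * ((r ^ ((d:ℝ)+2))⁻¹ * (L^2)⁻¹)) := by
      have pt : ∀ t ∈ Set.Ioc (r^2) r, G t * F t ≤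
          ENNReal.ofReal ((4*Real.pi) ^ (-(d:ℝ)/2) * (L^2)⁻¹) *
            ENNReal.ofReal (t ^ (-((d:ℝ)/2+2))) := by
        intro t ht
        have ht0 : 0 < t := lt_trans hr2pos ht.1
        rw [hG, hF, ← ENNReal.ofReal_mul (by positivity),
          ← ENNReal.ofReal_mul (by positivity)]
        apply ENNReal.ofReal_le_ofReal
        exact auxB d hr hL1 hLdef ht0 ht.2
      calc ∫⁻ t in Set.Ioc (r^2) r, G t * F t
          ≤ ∫⁻ t in Set.Ioc (r^2) r,
              ENNReal.ofReal ((4*Real.pi) ^ (-(d:ℝ)/2) * (L^2)⁻¹) *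
                ENNReal.ofReal (t ^ (-((d:ℝ)/2+2))) :=
            setLIntegral_mono' measurableSet_Ioc pt
        _ = ENNReal.ofReal ((4*Real.pi) ^ (-(d:ℝ)/2) * (L^2)⁻¹) *
              ∫⁻ t in Set.Ioc (r^2) r, ENNReal.ofReal (t ^ (-((d:ℝ)/2+2))) :=
            lintegral_const_mul' _ _ ENNReal.ofReal_ne_top
        _ ≤ ENNReal.ofReal ((4*Real.pi) ^ (-(d:ℝ)/2) * (L^2)⁻¹) *
              ENNReal.ofReal ((r^2) ^ (1 - ((d:ℝ)/2+2))) := by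
            apply mul_le_mul_right
            exact aux_lint_rpow hq2 hr2pos hr2r
        _ = ENNReal.ofReal ((4*Real.pi) ^ (-(d:ℝ)/2) * (L^2)⁻¹ * (r^2) ^ (1 - ((d:ℝ)/2+2))) := by
            rw [← ENNReal.ofReal_mul (by positivity)]
        _ = ENNReal.ofReal (KB * ((r ^ ((d:ℝ)+2))⁻¹ * (L^2)⁻¹)) := by
            congr 1
            have e : ((r^2:ℝ)) ^ (1-((d:ℝ)/2+2)) = (r ^ ((d:ℝ)+2))⁻¹ := by
              rw [← Real.rpow_natCast r 2, ← Real.rpow_mul hr.le,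
                show ((2:ℕ):ℝ)*(1-((d:ℝ)/2+2)) = -((d:ℝ)+2) by push_cast; ring,
                Real.rpow_neg hr.le]
            rw [e, hKB]
            ring
    have pC : ∫⁻ t in Set.Ioc r δ, G t * F t ≤
        ENNReal.ofReal (KC * ((r ^ ((d:ℝ)+2))⁻¹ * (L^2)⁻¹)) := by
      have pt : ∀ t ∈ Set.Ioc r δ, G t * F t ≤
          ENNReal.ofReal ((4*Real.pi) ^ (-(d:ℝ)/2)) *
            ENNReal.ofReal (t ^ (-((d:ℝ)/2+2))) := by
        intro t ht
        have ht0 : 0 < t := lt_trans hr ht.1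
        rw [hG, hF, ← ENNReal.ofReal_mul (by positivity),
          ← ENNReal.ofReal_mul (by positivity)]
        apply ENNReal.ofReal_le_ofReal
        exact auxC0 d ht0
      calc ∫⁻ t in Set.Ioc r δ, G t * F t
          ≤ ∫⁻ t in Set.Ioc r δ,
              ENNReal.ofReal ((4*Real.pi) ^ (-(d:ℝ)/2)) *
                ENNReal.ofReal (t ^ (-((d:ℝ)/2+2))) :=
            setLIntegral_mono' measurableSet_Ioc pt
        _ = ENNReal.ofReal ((4*Real.pi) ^ (-(d:ℝ)/2)) *
              ∫⁻ t in Set.Ioc r δ, ENNReal.ofReal (t ^ (-((d:ℝ)/2+2))) :=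
            lintegral_const_mul' _ _ ENNReal.ofReal_ne_top
        _ ≤ ENNReal.ofReal ((4*Real.pi) ^ (-(d:ℝ)/2)) *
              ENNReal.ofReal (r ^ (1 - ((d:ℝ)/2+2))) := by
            apply mul_le_mul_right
            exact aux_lint_rpow hq2 hr hrδ
        _ = ENNReal.ofReal ((4*Real.pi) ^ (-(d:ℝ)/2) * r ^ (1 - ((d:ℝ)/2+2))) := by
            rw [← ENNReal.ofReal_mul (by positivity)]
        _ ≤ ENNReal.ofReal (KC * ((r ^ ((d:ℝ)+2))⁻¹ * (L^2)⁻¹)) := by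
            apply ENNReal.ofReal_le_ofReal
            rw [hKC]
            exact auxC d hd hr hr1 hL1 hLdef
    have hsplit2 : ∫⁻ t in Set.Ioc 0 δ, G t * F t =
        (∫⁻ t in Set.Ioc 0 (r^2), G t * F t) + (∫⁻ t in Set.Ioc (r^2) r, G t * F t) +
          ∫⁻ t in Set.Ioc r δ, G t * F t := by
      rw [← Set.Ioc_union_Ioc_eq_Ioc hr.le hrδ,
        lintegral_union measurableSet_Ioc (Set.Ioc_disjoint_Ioc_of_le le_rfl),
        ← Set.Ioc_union_Ioc_eq_Ioc hr2pos.le hr2r,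
        lintegral_union measurableSet_Ioc (Set.Ioc_disjoint_Ioc_of_le le_rfl)]
    calc j r = (∫⁻ t in Set.Ioc 0 δ, F t ∂μ) + ∫⁻ t in Set.Ioi δ, F t ∂μ := hsplit
      _ ≤ (ENNReal.ofReal c₂ * ∫⁻ t in Set.Ioc 0 δ, G t * F t) +
            ENNReal.ofReal (KT * ((r ^ ((d:ℝ)+2))⁻¹ * (L^2)⁻¹)) := add_le_add hmain htail
      _ ≤ (ENNReal.ofReal c₂ *
            (ENNReal.ofReal (KA * ((r ^ ((d:ℝ)+2))⁻¹ * (L^2)⁻¹)) +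
             ENNReal.ofReal (KB * ((r ^ ((d:ℝ)+2))⁻¹ * (L^2)⁻¹)) +
             ENNReal.ofReal (KC * ((r ^ ((d:ℝ)+2))⁻¹ * (L^2)⁻¹)))) +
            ENNReal.ofReal (KT * ((r ^ ((d:ℝ)+2))⁻¹ * (L^2)⁻¹)) := by
          apply add_le_add_left
          apply mul_le_mul_right
          rw [hsplit2]
          exact add_le_add (add_le_add pA pB) pC
      _ = ENNReal.ofReal (c₂ * (KA * ((r ^ ((d:ℝ)+2))⁻¹ * (L^2)⁻¹) +
             KB * ((r ^ ((d:ℝ)+2))⁻¹ * (L^2)⁻¹) + KC * ((r ^ ((d:ℝ)+2))⁻¹ * (L^2)⁻¹)) +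
             KT * ((r ^ ((d:ℝ)+2))⁻¹ * (L^2)⁻¹)) := by
          rw [← ENNReal.ofReal_add (by positivity) (by positivity),
            ← ENNReal.ofReal_add (by positivity) (by positivity),
            ← ENNReal.ofReal_mul hc₂.le,
            ← ENNReal.ofReal_add (by positivity) (by positivity)]
      _ ≤ ENNReal.ofReal (C₂ * ((r ^ ((d:ℝ)+2))⁻¹ * (L^2)⁻¹)) := by
          apply ENNReal.ofReal_le_ofReal
          have e : c₂ * (KA * ((r ^ ((d:ℝ)+2))⁻¹ * (L^2)⁻¹) +
             KB * ((r ^ ((d:ℝ)+2))⁻¹ * (L^2)⁻¹) + KC * ((r ^ ((d:ℝ)+2))⁻¹ * (L^2)⁻¹)) +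
             KT * ((r ^ ((d:ℝ)+2))⁻¹ * (L^2)⁻¹)
             = (c₂ * (KA + KB + KC) + KT) * ((r ^ ((d:ℝ)+2))⁻¹ * (L^2)⁻¹) := by ring
          rw [e, hC₂]
          nlinarith [mul_nonneg hC₁pos.le hWnn]
      _ = ENNReal.ofReal (C₂ * (r ^ ((d:ℝ)+2))⁻¹ * (L^2)⁻¹) := by rw [mul_assoc]
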